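/- Let d ≥ 2 be an integer and let w ∈ ℝ^d satisfy w(1) ≠ 0 and w(d) ≠ 0. Then the quotient set Q∼(w,d) is finite with cardinality at most 2d − 2. -/

import Mathlib

open scoped BigOperators
open MeasureTheory

noncomputable section

/-- 1-based access into a vector `u ∈ ℝ^d`, with the convention that
out-of-range indices (including `0` and anything `> d`) give `0`. -/
def pad1 {d : ℕ} (u : Fin d → ℝ) (i : ℕ) : ℝ :=
  if h : 1 ≤ i ∧ i ≤ d then u ⟨i - 1, by omega⟩ else 0

/-- The lifted linear convolution map `S_{(m,n)} : ℝ^{m×n} → ℝ^{m+n-1}`,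
summing the entries of a matrix along its anti-diagonals. -/
def liftS (m n : ℕ) (W : Matrix (Fin m) (Fin n) ℝ) : Fin (m + n - 1) → ℝ :=
  fun l => ∑ k : Fin m, ∑ j : Fin n, if (k : ℕ) + (j : ℕ) = (l : ℕ) then W k j else 0

/-- Linear convolution `x ⋆ y ∈ ℝ^{m+n-1}` of `x ∈ ℝ^m` and `y ∈ ℝ^n`. -/
def conv {m n : ℕ} (x : Fin m → ℝ) (y : Fin n → ℝ) : Fin (m + n - 1) → ℝ :=
  fun l => ∑ k : Fin m, ∑ j : Fin n, if (k : ℕ) + (j : ℕ) = (l : ℕ) then x k * y j else 0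

/-- The rank-two null space `N(S_{(m,n)}, 2)`. -/
def rankTwoNull (m n : ℕ) : Set (Matrix (Fin m) (Fin n) ℝ) :=
  {Q | Q.rank ≤ 2 ∧ liftS m n Q = 0}

/-- The parametrized family `N0(m,n)`:
`Q(k,l) = u(k)·v(l−1) − u(k−1)·v(l)` (1-based, with zero-padding conventions). -/
def N0set (m n : ℕ) : Set (Matrix (Fin m) (Fin n) ℝ) :=
  {Q | ∃ (u : Fin (m - 1) → ℝ) (v : Fin (n - 1) → ℝ),
    ∀ (k : Fin m) (l : Fin n),
      Q k l = pad1 u ((k : ℕ) + 1) * pad1 v (l : ℕ) - pad1 u (k : ℕ) * pad1 v ((l : ℕ) + 1)}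

/-- The recursively defined family `N2(m,n)`:
`Q(k,l) = u₁(k)·v₁(l−1) + u₂(k−1)·v₂(l)` (1-based, with zero-padding conventions),
where `u₁v₁ᵀ + u₂v₂ᵀ ∈ N(S_{(m-1,n-1)}, 2) \ {0}`. -/
def N2set (m n : ℕ) : Set (Matrix (Fin m) (Fin n) ℝ) :=
  {Q | ∃ (u₁ u₂ : Fin (m - 1) → ℝ) (v₁ v₂ : Fin (n - 1) → ℝ),
    (Matrix.of fun i j => u₁ i * v₁ j + u₂ i * v₂ j) ∈ rankTwoNull (m - 1) (n - 1) ∧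
    (Matrix.of fun i j => u₁ i * v₁ j + u₂ i * v₂ j) ≠ (0 : Matrix (Fin (m - 1)) (Fin (n - 1)) ℝ) ∧
    ∀ (k : Fin m) (l : Fin n),
      Q k l = pad1 u₁ ((k : ℕ) + 1) * pad1 v₁ (l : ℕ) + pad1 u₂ (k : ℕ) * pad1 v₂ ((l : ℕ) + 1)}

/-- The exceptional set `M(m,n) = {Q ∈ N(S_{(m,n)}, 2) : Q(m,1) = 0 and Q(1,n) = 0}` (1-based). -/
def Mexc (m n : ℕ) (hm : 0 < m) (hn : 0 < n) : Set (Matrix (Fin m) (Fin n) ℝ) :=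
  {Q | Q ∈ rankTwoNull m n ∧ Q ⟨m - 1, by omega⟩ ⟨0, hn⟩ = 0 ∧ Q ⟨0, hm⟩ ⟨n - 1, by omega⟩ = 0}

/-- Identifiability of the pair `p = (x,y)` with respect to linear convolution
and the constraint set `K`. -/
def Identifiable {m n : ℕ} (K : Set ((Fin m → ℝ) × (Fin n → ℝ)))
    (p : (Fin m → ℝ) × (Fin n → ℝ)) : Prop :=
  ∀ q ∈ K, conv q.1 q.2 = conv p.1 p.2 →
    ∃ α : ℝ, α ≠ 0 ∧ q.1 = α • p.1 ∧ q.2 = (1 / α) • p.2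

/-- The quotient set `Q∼(w,d)`: pairs `(w*, γ) ∈ ℝ^{d-1} × [0, 2π)` with
`w(j) = w*(j)·cos γ − w*(j−1)·sin γ` for `1 ≤ j ≤ d` (1-based, zero-padding conventions). -/
def quotSet (d : ℕ) (w : Fin d → ℝ) : Set ((Fin (d - 1) → ℝ) × ℝ) :=
  {p | p.2 ∈ Set.Ico 0 (2 * Real.pi) ∧
    ∀ j : Fin d, w j = pad1 p.1 ((j : ℕ) + 1) * Real.cos p.2 - pad1 p.1 (j : ℕ) * Real.sin p.2}

/-- Matrices over `ℝ` carry the (product) metric space structure of `ℝ^{m×n}`. -/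
instance {m n : ℕ} : MetricSpace (Matrix (Fin m) (Fin n) ℝ) :=
  show MetricSpace (Fin m → Fin n → ℝ) from inferInstance


/-! ### Auxiliary lemmas for `stmt9` -/

lemma pad1_succ' {m : ℕ} (u : Fin m → ℝ) (i : ℕ) (h : i < m) :
    pad1 u (i + 1) = u ⟨i, h⟩ := by
  rw [pad1, dif_pos ⟨by omega, by omega⟩]
  congr 1

lemma pad1_zero' {m : ℕ} (u : Fin m → ℝ) : pad1 u 0 = 0 := by
  rw [pad1, dif_neg]; omega

lemma pad1_of_gt' {m : ℕ} (u : Fin m → ℝ) (i : ℕ) (h : m < i) : pad1 u i = 0 := by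
  rw [pad1, dif_neg]; omega

lemma quot_uniq' (d : ℕ) (w : Fin d → ℝ) (u u' : Fin (d - 1) → ℝ) (γ : ℝ)
    (hc : Real.cos γ ≠ 0)
    (h : ∀ j : Fin d, w j = pad1 u ((j : ℕ) + 1) * Real.cos γ - pad1 u (j : ℕ) * Real.sin γ)
    (h' : ∀ j : Fin d, w j = pad1 u' ((j : ℕ) + 1) * Real.cos γ - pad1 u' (j : ℕ) * Real.sin γ) :
    u = u' := by
  have key : ∀ j : ℕ, pad1 u j = pad1 u' j := by
    intro j
    induction j with
    | zero => rw [pad1_zero', pad1_zero']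
    | succ j ih =>
      by_cases hj : j + 1 ≤ d - 1
      · have hjd : j < d := by omega
        have e1 := h ⟨j, hjd⟩
        have e2 := h' ⟨j, hjd⟩
        simp only at e1 e2
        have : pad1 u (j + 1) * Real.cos γ = pad1 u' (j + 1) * Real.cos γ := by
          rw [ih] at e1; linarith
        exact mul_right_cancel₀ hc this
      · rw [pad1_of_gt' u _ (by omega), pad1_of_gt' u' _ (by omega)]
  funext i
  have := key ((i : ℕ) + 1)
  rw [pad1_succ' u _ i.2, pad1_succ' u' _ i.2] at this
  simpa using this

lemma keyA' (d : ℕ) (w : Fin d → ℝ) (u : Fin (d - 1) → ℝ) (γ : ℝ)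
    (h : ∀ j : Fin d, w j = pad1 u ((j : ℕ) + 1) * Real.cos γ - pad1 u (j : ℕ) * Real.sin γ) :
    ∀ j, j < d → pad1 u (j + 1) * (Real.cos γ) ^ (j + 1) =
      ∑ i ∈ Finset.range (j + 1), pad1 w (i + 1) * (Real.sin γ) ^ (j - i) * (Real.cos γ) ^ i := by
  intro j
  induction j with
  | zero =>
    intro hd0
    have e := h ⟨0, hd0⟩
    simp only at e
    rw [pad1_zero'] at e
    rw [Finset.sum_range_one, pad1_succ' w 0 hd0]
    simp at e ⊢
    linarith
  | succ j ih =>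
    intro hj1
    have hj : j < d := by omega
    have ihj := ih hj
    have e := h ⟨j + 1, hj1⟩
    simp only at e
    rw [Finset.sum_range_succ]
    have hsum : ∑ i ∈ Finset.range (j + 1), pad1 w (i + 1) * Real.sin γ ^ (j + 1 - i) * Real.cos γ ^ i
        = Real.sin γ * ∑ i ∈ Finset.range (j + 1), pad1 w (i + 1) * Real.sin γ ^ (j - i) * Real.cos γ ^ i := by
      rw [Finset.mul_sum]
      refine Finset.sum_congr rfl fun i hi => ?_
      have : i ≤ j := by simpa using Nat.lt_succ_iff.mp (Finset.mem_range.mp hi)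
      have hpow : (Real.sin γ) ^ (j + 1 - i) = Real.sin γ * (Real.sin γ) ^ (j - i) := by
        rw [show j + 1 - i = (j - i) + 1 by omega, pow_succ]; ring
      rw [hpow]; ring
    rw [hsum, ← ihj, pad1_succ' w (j + 1) hj1, e, Nat.sub_self, pow_zero, mul_one]
    ring

noncomputable def Pw (d : ℕ) (w : Fin d → ℝ) : Polynomial ℝ :=
  ∑ j : Fin d, Polynomial.C (w j) * Polynomial.X ^ (d - 1 - (j : ℕ))

lemma Pw_coeff_zero (d : ℕ) (hd : 2 ≤ d) (w : Fin d → ℝ) :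
    (Pw d w).coeff 0 = w ⟨d - 1, Nat.sub_lt (lt_of_lt_of_le two_pos hd) one_pos⟩ := by
  rw [Pw, Polynomial.finset_sum_coeff]
  rw [Finset.sum_eq_single (⟨d - 1, by omega⟩ : Fin d)]
  · simp
  · intro b _ hb
    have : (b : ℕ) < d - 1 := by
      have := b.2
      rcases Nat.lt_or_ge (b : ℕ) (d - 1) with h | h
      · exact h
      · exact absurd (Fin.ext (show (b : ℕ) = d - 1 by omega)) hb
    simp [Polynomial.coeff_C_mul, Polynomial.coeff_X_pow]
    omega
  · simp

lemma Pw_ne_zero (d : ℕ) (hd : 2 ≤ d) (w : Fin d → ℝ) (h2 : w ⟨d - 1, Nat.sub_lt (lt_of_lt_of_le two_pos hd) one_pos⟩ ≠ 0) :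
    Pw d w ≠ 0 := by
  intro h
  apply h2
  rw [← Pw_coeff_zero d hd w, h, Polynomial.coeff_zero]

lemma Pw_natDegree (d : ℕ) (hd : 2 ≤ d) (w : Fin d → ℝ) : (Pw d w).natDegree ≤ d - 1 := by
  refine Polynomial.natDegree_sum_le_of_forall_le _ _ fun j _ => ?_
  exact le_trans (Polynomial.natDegree_C_mul_X_pow_le _ _) (by omega)

lemma cos_ne_zero_of_mem (d : ℕ) (hd : 2 ≤ d) (w : Fin d → ℝ) (h1 : w ⟨0, lt_of_lt_of_le two_pos hd⟩ ≠ 0)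
    (u : Fin (d - 1) → ℝ) (γ : ℝ)
    (h : ∀ j : Fin d, w j = pad1 u ((j : ℕ) + 1) * Real.cos γ - pad1 u (j : ℕ) * Real.sin γ) :
    Real.cos γ ≠ 0 := by
  intro hc
  apply h1
  have e := h ⟨0, by omega⟩
  simp only at e
  rw [pad1_zero', hc] at e
  simpa using e

lemma tan_isRoot (d : ℕ) (hd : 2 ≤ d) (w : Fin d → ℝ)
    (u : Fin (d - 1) → ℝ) (γ : ℝ) (hc : Real.cos γ ≠ 0)
    (h : ∀ j : Fin d, w j = pad1 u ((j : ℕ) + 1) * Real.cos γ - pad1 u (j : ℕ) * Real.sin γ) :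
    (Pw d w).IsRoot (Real.tan γ) := by
  set c := Real.cos γ with hcdef
  set s := Real.sin γ with hsdef
  have hsum0 : ∑ i ∈ Finset.range d, pad1 w (i + 1) * s ^ (d - 1 - i) * c ^ i = 0 := by
    have := keyA' d w u γ h (d - 1) (by omega)
    rw [show d - 1 + 1 = d by omega] at this
    rw [pad1_of_gt' u d (by omega)] at this
    linarith [this]
  have heval : (Pw d w).eval (Real.tan γ) * c ^ (d - 1)
      = ∑ i ∈ Finset.range d, pad1 w (i + 1) * s ^ (d - 1 - i) * c ^ i := by
    rw [Pw]
    simp only [Polynomial.eval_finset_sum, Polynomial.eval_mul, Polynomial.eval_C,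
      Polynomial.eval_pow, Polynomial.eval_X]
    rw [Finset.sum_mul, ← Fin.sum_univ_eq_sum_range
      (fun i => pad1 w (i + 1) * s ^ (d - 1 - i) * c ^ i) d]
    refine Finset.sum_congr rfl fun i _ => ?_
    simp only [pad1_succ' w (i : ℕ) i.2, Fin.eta]
    have hk : c ^ (d - 1) = c ^ (d - 1 - (i : ℕ)) * c ^ (i : ℕ) := by
      rw [← pow_add]; congr 1; omega
    have hne : c ^ (d - 1 - (i : ℕ)) ≠ 0 := pow_ne_zero _ hc
    rw [Real.tan_eq_sin_div_cos, div_pow, hk, ← hcdef, ← hsdef]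
    field_simp
  have : (Pw d w).eval (Real.tan γ) * c ^ (d - 1) = 0 := by rw [heval, hsum0]
  have hcp : c ^ (d - 1) ≠ 0 := pow_ne_zero _ hc
  exact (mul_eq_zero.mp this).resolve_right hcp


/-- for `d ≥ 2` and `w ∈ ℝ^d` with `w(1) ≠ 0` and `w(d) ≠ 0`, the quotient
set `Q∼(w,d)` is finite with cardinality at most `2d − 2`. -/
theorem stmt9 (d : ℕ) (hd : 2 ≤ d) (w : Fin d → ℝ)
    (h1 : w ⟨0, by omega⟩ ≠ 0) (h2 : w ⟨d - 1, by omega⟩ ≠ 0) :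
    (quotSet d w).Finite ∧ (quotSet d w).ncard ≤ 2 * d - 2 := by
  classical
  set P := Pw d w with hP
  have hPne : P ≠ 0 := Pw_ne_zero d hd w h2
  set R : Finset ℝ := P.roots.toFinset with hR
  set φ : (Fin (d - 1) → ℝ) × ℝ → ℝ × Bool :=
    fun p => (Real.tan p.2, if p.2 < Real.pi then true else false) with hφ
  have hcos : ∀ p ∈ quotSet d w, Real.cos p.2 ≠ 0 := fun p hp =>
    cos_ne_zero_of_mem d hd w h1 p.1 p.2 hp.2
  have hinj : Set.InjOn φ (quotSet d w) := by
    intro p hp q hq hpq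
    have hcp := hcos p hp
    have hcq := hcos q hq
    have htan : Real.tan p.2 = Real.tan q.2 := congrArg Prod.fst hpq
    have hbool : (if p.2 < Real.pi then true else false) = (if q.2 < Real.pi then true else false) :=
      congrArg Prod.snd hpq
    obtain ⟨hp0, hp2⟩ := hp.1
    obtain ⟨hq0, hq2⟩ := hq.1
    have hpi := Real.pi_pos
    have hsin : Real.sin (p.2 - q.2) = 0 := by
      rw [Real.sin_sub]
      rw [Real.tan_eq_sin_div_cos, Real.tan_eq_sin_div_cos] at htan
      field_simp at htan
      linarith
    obtain ⟨n, hn⟩ := Real.sin_eq_zero_iff.mp hsin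
    have hlt : (n : ℝ) < 2 := by nlinarith
    have hgt : (-2 : ℝ) < n := by nlinarith
    have hlt' : n < 2 := by exact_mod_cast hlt
    have hgt' : (-2 : ℤ) < n := by exact_mod_cast hgt
    have hcases : n = -1 ∨ n = 0 ∨ n = 1 := by omega
    have hangle : p.2 = q.2 := by
      rcases hcases with h | h | h
      · exfalso
        rw [h] at hn
        push_cast at hn
        have hqlt : ¬ q.2 < Real.pi := not_lt.mpr (by linarith)
        have hplt : p.2 < Real.pi := by linarith
        rw [if_pos hplt, if_neg hqlt] at hbool
        simp at hbool
      · rw [h] at hn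
        push_cast at hn
        linarith
      · exfalso
        rw [h] at hn
        push_cast at hn
        have hplt : ¬ p.2 < Real.pi := not_lt.mpr (by linarith)
        have hqlt : q.2 < Real.pi := by linarith
        rw [if_neg hplt, if_pos hqlt] at hbool
        simp at hbool
    have hvec : p.1 = q.1 := by
      refine quot_uniq' d w p.1 q.1 p.2 hcp hp.2 ?_
      rw [hangle]
      exact hq.2
    exact Prod.ext hvec hangle
  have himg : φ '' quotSet d w ⊆ ↑(R ×ˢ (Finset.univ : Finset Bool)) := by
    rintro _ ⟨p, hp, rfl⟩
    simp only [Finset.coe_product, Set.mem_prod, Finset.mem_coe, Finset.coe_univ, Set.mem_univ,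
      and_true]
    rw [hR, Multiset.mem_toFinset, Polynomial.mem_roots hPne]
    exact tan_isRoot d hd w p.1 p.2 (hcos p hp) hp.2
  have hfinimg : (φ '' quotSet d w).Finite :=
    (Finset.finite_toSet _).subset himg
  have hfin : (quotSet d w).Finite := Set.Finite.of_finite_image hfinimg hinj
  refine ⟨hfin, ?_⟩
  have hRcard : R.card ≤ d - 1 :=
    le_trans (Multiset.toFinset_card_le _) (le_trans (Polynomial.card_roots' P) (Pw_natDegree d hd w))
  calc (quotSet d w).ncard = (φ '' quotSet d w).ncard := (Set.ncard_image_of_injOn hinj).symm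
    _ ≤ ((R ×ˢ (Finset.univ : Finset Bool) : Finset (ℝ × Bool)) : Set (ℝ × Bool)).ncard :=
        Set.ncard_le_ncard himg (Finset.finite_toSet _)
    _ = (R ×ˢ (Finset.univ : Finset Bool)).card := Set.ncard_coe_finset _
    _ = R.card * 2 := by rw [Finset.card_product]; simp
    _ ≤ 2 * d - 2 := by omega
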